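/- Let J be an unbounded subinterval of ℝ and g : J → ℝ a locally absolutely continuous function on J with derivative g′. Assume g ∈ L^∞(J) and that there exist V_J > 0 and r ∈ (0,1] such that the total variation of g′ on the interval with endpoints a and b is at most V_J·|b − a|^r for all a, b ∈ J. Then for every b ∈ J and every λ > 0 one has |g′(b)| ≤ 2‖g‖_{J,∞}/λ + V_J·λ^r (using that, since J is unbounded, for every b ∈ J and λ > 0 there exists a ∈ J with |b − a| = λ). -/

import Mathlib

open MeasureTheory Set Topology Filter

/-- In an unbounded ord-connected set, every point has points of the set at any
prescribed distance. -/
lemma landau_exists_dist_eq (J : Set ℝ) (hJ : J.OrdConnected) (hJu : ¬ Bornology.IsBounded J)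
    {b : ℝ} (hb : b ∈ J) {l : ℝ} (hl : 0 < l) : ∃ a ∈ J, |b - a| = l := by
  rw [isBounded_iff_bddBelow_bddAbove, not_and_or] at hJu
  rcases hJu with h | h
  · rw [not_bddBelow_iff] at h
    obtain ⟨y, hy, hyl⟩ := h (b - l)
    refine ⟨b - l, hJ.out hy hb ⟨hyl.le, by linarith⟩, by
      rw [show b - (b - l) = l by ring, abs_of_pos hl]⟩
  · rw [not_bddAbove_iff] at h
    obtain ⟨y, hy, hyl⟩ := h (b + l)
    refine ⟨b + l, hJ.out hb hy ⟨by linarith, hyl.le⟩, by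
      rw [show b - (b + l) = -l by ring, abs_neg, abs_of_pos hl]⟩

/-- A function continuous within an unbounded ord-connected set which satisfies a bound
a.e. satisfies it everywhere on the set. -/
lemma ae_bound_everywhere (J : Set ℝ) (hJ : J.OrdConnected) (hJu : ¬ Bornology.IsBounded J)
    (g : ℝ → ℝ) (hc : ∀ x ∈ J, ContinuousWithinAt g J x) (C : ℝ)
    (hae : ∀ᵐ x ∂(volume.restrict J), |g x| ≤ C) :
    ∀ x ∈ J, |g x| ≤ C := by
  intro x hx
  set S : Set ℝ := {z ∈ J | |g z| ≤ C} with hS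
  have hnull : volume ({z ∈ J | ¬ |g z| ≤ C}) = 0 := by
    have h1 := (ae_restrict_iff' hJ.measurableSet).mp hae
    rw [ae_iff] at h1
    have h2 : {z | ¬ (z ∈ J → |g z| ≤ C)} = {z ∈ J | ¬ |g z| ≤ C} := by
      ext z; simp [_root_.not_imp]
    rwa [h2] at h1
  have hclos : x ∈ closure (S \ {x}) := by
    rw [mem_closure_iff]
    intro o ho hxo
    obtain ⟨ε, hε, hball⟩ := Metric.isOpen_iff.mp ho x hxo
    rw [isBounded_iff_bddBelow_bddAbove, not_and_or] at hJu
    have key : ∀ t : ℝ, volume (Ioo (min x t) (max x t)) ≠ 0 →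
        Ioo (min x t) (max x t) ⊆ J → Ioo (min x t) (max x t) ⊆ o →
        (o ∩ (S \ {x})).Nonempty := by
      intro t hvol hsubJ hsubo
      have : ¬ (Ioo (min x t) (max x t) ⊆ {z ∈ J | ¬ |g z| ≤ C} ∪ {x}) := by
        intro hsub
        apply hvol
        refine measure_mono_null hsub ?_
        exact measure_union_null hnull (measure_singleton x)
      rw [not_subset] at this
      obtain ⟨z, hz, hz2⟩ := this
      simp only [mem_union, mem_setOf_eq, not_or, mem_singleton_iff] at hz2
      push_neg at hz2
      exact ⟨z, hsubo hz, ⟨⟨hsubJ hz, hz2.1 (hsubJ hz)⟩, hz2.2⟩⟩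
    rcases hJu with h | h
    · rw [not_bddBelow_iff] at h
      obtain ⟨y, hy, hyl⟩ := h (x - ε)
      set t := max y (x - ε/2) with ht
      have htx : t < x := by
        apply max_lt (by linarith) (by linarith)
      have h1 : min x t = t := min_eq_right htx.le
      have h2 : max x t = x := max_eq_left htx.le
      refine key t ?_ ?_ ?_ <;> rw [h1, h2]
      · simp [htx]
      · intro z hz
        exact hJ.out hy hx ⟨le_trans (le_max_left _ _) hz.1.le, hz.2.le⟩
      · intro z hz
        apply hball
        rw [Metric.mem_ball, Real.dist_eq, abs_lt]
        constructor
        · have : x - ε/2 ≤ t := le_max_right _ _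
          linarith [hz.1]
        · linarith [hz.2]
    · rw [not_bddAbove_iff] at h
      obtain ⟨y, hy, hyl⟩ := h (x + ε)
      set t := min y (x + ε/2) with ht
      have htx : x < t := lt_min (by linarith) (by linarith)
      have h1 : min x t = x := min_eq_left htx.le
      have h2 : max x t = t := max_eq_right htx.le
      refine key t ?_ ?_ ?_ <;> rw [h1, h2]
      · simp [htx]
      · intro z hz
        exact hJ.out hx hy ⟨hz.1.le, le_trans hz.2.le (min_le_left _ _)⟩
      · intro z hz
        apply hball
        rw [Metric.mem_ball, Real.dist_eq, abs_lt]
        constructor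
        · linarith [hz.1]
        · have : t ≤ x + ε/2 := min_le_right _ _
          linarith [hz.2]
  have hne : (𝓝[S \ {x}] x).NeBot := mem_closure_iff_nhdsWithin_neBot.mp hclos
  have htend : Filter.Tendsto (fun z => |g z|) (𝓝[S \ {x}] x) (𝓝 |g x|) := by
    apply Filter.Tendsto.abs
    exact ((hc x hx).mono (fun z hz => hz.1.1)).tendsto
  refine le_of_tendsto htend ?_
  filter_upwards [self_mem_nhdsWithin] with z hz
  exact hz.1.2

/-- The key pointwise estimate: under the hypotheses of Theorem 3, for every `b ∈ J` and
`λ > 0` one has `|g'(b)| ≤ 2‖g‖_{J,∞}/λ + V λ^r`. -/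
theorem landau_pointwise_estimate
    (J : Set ℝ) (hJ : J.OrdConnected) (hJu : ¬ Bornology.IsBounded J)
    (g g' : ℝ → ℝ) (hderiv : ∀ x ∈ J, HasDerivWithinAt g (g' x) J x)
    (hg : MemLp g ⊤ (volume.restrict J))
    (V r : ℝ) (hV : 0 < V) (hr : r ∈ Ioc (0 : ℝ) 1)
    (hvar : ∀ a ∈ J, ∀ b ∈ J,
      eVariationOn g' (uIcc a b) ≤ ENNReal.ofReal (V * |b - a| ^ r)) :
    ∀ b ∈ J, ∀ l : ℝ, 0 < l →
      |g' b| ≤ 2 * (eLpNorm g ⊤ (volume.restrict J)).toReal / l + V * l ^ r := by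
  intro b hb l hl
  set C := (eLpNorm g ⊤ (volume.restrict J)).toReal with hC
  -- a.e. bound from Memℒp
  have hCae : ∀ᵐ x ∂(volume.restrict J), |g x| ≤ C := by
    filter_upwards [ae_le_eLpNormEssSup (f := g) (μ := volume.restrict J)] with x hx
    have hfin : eLpNorm g ⊤ (volume.restrict J) ≠ ⊤ := hg.eLpNorm_ne_top
    rw [eLpNorm_exponent_top] at hC
    have : (‖g x‖₊ : ENNReal).toReal ≤ C := by
      rw [hC]
      exact ENNReal.toReal_mono (by rwa [eLpNorm_exponent_top] at hfin) hx
    simpa [Real.norm_eq_abs] using this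
  have hgbd : ∀ x ∈ J, |g x| ≤ C :=
    ae_bound_everywhere J hJ hJu g (fun x hx => (hderiv x hx).continuousWithinAt) C hCae
  obtain ⟨a, ha, hab⟩ := landau_exists_dist_eq J hJ hJu hb hl
  have hVl : 0 ≤ V * l ^ r := by positivity
  -- set up interval endpoints
  have hne : a ≠ b := by
    intro h; rw [h] at hab; simp at hab; linarith
  set lo := min a b with hlo
  set hi := max a b with hhi
  have hlohi : lo < hi := min_lt_max.mpr hne
  have hdiff : hi - lo = l := by
    rw [hlo, hhi, max_sub_min_eq_abs]; exact hab
  have hlomem : lo ∈ J := by rcases min_choice a b with h | h <;> rw [hlo, h] <;> assumption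
  have hhimem : hi ∈ J := by rcases max_choice a b with h | h <;> rw [hhi, h] <;> assumption
  have hIccJ : Icc lo hi ⊆ J := hJ.out hlomem hhimem
  -- mean value theorem
  have hcont : ContinuousOn g (Icc lo hi) := fun x hx =>
    ((hderiv x (hIccJ hx)).continuousWithinAt).mono hIccJ
  have hdiff' : ∀ x ∈ Ioo lo hi, HasDerivAt g (g' x) x := by
    intro x hx
    refine (hderiv x (hIccJ (Ioo_subset_Icc_self hx))).hasDerivAt ?_
    exact Filter.mem_of_superset (isOpen_Ioo.mem_nhds hx)
      ((Ioo_subset_Icc_self).trans hIccJ)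
  obtain ⟨c, hc, hslope⟩ := exists_hasDerivAt_eq_slope g g' hlohi hcont hdiff'
  -- bound on |g' c|
  have hgc : |g' c| ≤ 2 * C / l := by
    rw [hslope, abs_div, abs_of_pos (by linarith : (0:ℝ) < hi - lo), hdiff]
    gcongr
    calc |g hi - g lo| ≤ |g hi| + |g lo| := abs_sub _ _
      _ ≤ C + C := add_le_add (hgbd hi hhimem) (hgbd lo hlomem)
      _ = 2 * C := by ring
  -- bound on |g' b - g' c| via variation
  have huIcc : uIcc a b = Icc lo hi := rfl
  have hbmem : b ∈ Icc lo hi := ⟨min_le_right a b, le_max_right a b⟩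
  have hcmem : c ∈ Icc lo hi := Ioo_subset_Icc_self hc
  have hvb : edist (g' b) (g' c) ≤ ENNReal.ofReal (V * l ^ r) := by
    have := (eVariationOn.edist_le g' (huIcc ▸ hbmem) (huIcc ▸ hcmem)).trans
      (hvar a ha b hb)
    rwa [hab] at this
  have hvb' : |g' b - g' c| ≤ V * l ^ r := by
    rw [edist_dist, Real.dist_eq] at hvb
    exact (ENNReal.ofReal_le_ofReal_iff hVl).mp hvb
  calc |g' b| = |(g' b - g' c) + g' c| := by ring_nf
    _ ≤ |g' b - g' c| + |g' c| := abs_add_le _ _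
    _ ≤ V * l ^ r + 2 * C / l := add_le_add hvb' hgc
    _ = 2 * C / l + V * l ^ r := by ring
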